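/- Let m, n be positive integers and consider (m,n)-lattice paths on the cylinder ℝ²/ℤ(m,n) (monotone lattice paths with m east steps and n north steps, viewed as {0,1}-valued configurations on the edge lattices satisfying the ice rule). Given two such paths π_1, π_2, define their pointwise max and min on each vertical line; then there exist unique paths π_1 ∨ π_2 and π_1 ∧ π_2 such that (π_1 ∨ π_2) + (π_1 ∧ π_2) = π_1 + π_2 as configurations, and π_1 ∨ π_2 ≥ π_1, π_2 ≥ π_1 ∧ π_2 in the partial order where π ≥ ν means every segment of π overlaps with ν or lies north of ν. -/
import Mathlib


/-- An `(m,n)`-lattice path on the cylinder `ℝ²/ℤ(m,n)`, encoded by its height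
function `y : ℤ → ℤ` (the height of the path over column `x`): it is monotone
(the path is a monotone lattice path) and quasi-periodic, `y(x+m) = y(x)+n`
(it is a loop on the cylinder, with `m` east steps and `n` north steps per
period). -/
def IsPath (m n : ℤ) (y : ℤ → ℤ) : Prop :=
  Monotone y ∧ ∀ x, y (x + m) = y x + n

/-- Given two `(m,n)`-paths `y₁, y₂` on the cylinder, there is a unique pair of
paths `(π₁ ∨ π₂, π₁ ∧ π₂)` whose sum, as configurations, equals `π₁ + π₂`
(per column, the multiset of heights agrees) and which satisfy
`π₁ ∨ π₂ ≥ π₁, π₂ ≥ π₁ ∧ π₂` in the north-dominance partial order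
(pointwise comparison of heights). -/
theorem stmt15 (m n : ℤ) (hm : 0 < m) (hn : 0 < n)
    (y1 y2 : ℤ → ℤ) (h1 : IsPath m n y1) (h2 : IsPath m n y2) :
    ∃! p : (ℤ → ℤ) × (ℤ → ℤ),
      IsPath m n p.1 ∧ IsPath m n p.2 ∧
      (∀ x : ℤ, ({p.1 x, p.2 x} : Multiset ℤ) = {y1 x, y2 x}) ∧
      (∀ x : ℤ, y1 x ≤ p.1 x ∧ y2 x ≤ p.1 x ∧ p.2 x ≤ y1 x ∧ p.2 x ≤ y2 x) := by
  refine ⟨(fun x => max (y1 x) (y2 x), fun x => min (y1 x) (y2 x)), ⟨?_, ?_, ?_, ?_⟩, ?_⟩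
  · exact ⟨fun a b hab => max_le_max (h1.1 hab) (h2.1 hab),
      fun x => by simp [h1.2 x, h2.2 x, max_add_add_right]⟩
  · exact ⟨fun a b hab => min_le_min (h1.1 hab) (h2.1 hab),
      fun x => by simp [h1.2 x, h2.2 x, min_add_add_right]⟩
  · intro x
    dsimp only
    simp only [Multiset.insert_eq_cons]
    rcases le_total (y1 x) (y2 x) with h | h
    · rw [max_eq_right h, min_eq_left h]; exact Multiset.cons_swap _ _ _
    · simp [max_eq_left h, min_eq_right h]
  · intro x
    exact ⟨le_max_left _ _, le_max_right _ _, min_le_left _ _, min_le_right _ _⟩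
  · rintro ⟨p1, p2⟩ ⟨_, _, hms, hord⟩
    have key : ∀ x, p1 x = max (y1 x) (y2 x) ∧ p2 x = min (y1 x) (y2 x) := by
      intro x
      have h := hms x
      simp only [Multiset.insert_eq_cons] at h
      have hcase : (p1 x = y1 x ∧ p2 x = y2 x) ∨ (p1 x = y2 x ∧ p2 x = y1 x) := by
        rw [Multiset.cons_eq_cons] at h
        rcases h with ⟨e1, e2⟩ | ⟨_, cs, e1, e2⟩
        · left; exact ⟨e1, by simpa using e2⟩
        · right
          simp only [Multiset.singleton_eq_cons_iff] at e1 e2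
          exact ⟨e2.1.symm, e1.1⟩
      obtain ⟨ha, hb, hc, hd⟩ := hord x
      rcases hcase with ⟨e1, e2⟩ | ⟨e1, e2⟩
      · constructor
        · rw [e1]; exact (max_eq_left (e1 ▸ hb)).symm
        · rw [e2]; exact (min_eq_right (e2 ▸ hc)).symm
      · constructor
        · rw [e1]; exact (max_eq_right (e1 ▸ ha)).symm
        · rw [e2]; exact (min_eq_left (e2 ▸ hd)).symm
    exact Prod.ext (funext fun x => (key x).1) (funext fun x => (key x).2)
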